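/- Let E be a real inner product space, f : E → ℝ convex and differentiable with L-Lipschitz gradient (L > 0), with nonempty minimizer set Ω and minimum value f*. Fix ᾱ ∈ (0, 1/L] and let x_{k+1} = x_k − ᾱ ∇f(x_k). Then for every k ≥ 1 and every x̄ ∈ Ω, k·(f(x_k) − f*) ≤ ∑_{T=1}^{k} (f(x_T) − f*) ≤ ‖x_0 − x̄‖²/(2ᾱ); in particular f(x_k) − f* ≤ dist(x_0, Ω)²/(2ᾱ k). -/

import Mathlib

open Metric Set

/-- line derivative -/
lemma gd_line_deriv {E : Type*} [NormedAddCommGroup E] [InnerProductSpace ℝ E]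
    (f : E → ℝ) (f' : E → E)
    (hderiv : ∀ x, HasFDerivAt f (innerSL ℝ (f' x)) x) (x v : E) (t : ℝ) :
    HasDerivAt (fun s : ℝ => f (x + s • v)) (inner ℝ (f' (x + t • v)) v : ℝ) t := by
  have h1 : HasDerivAt (fun s : ℝ => x + s • v) v t := by
    simpa using ((hasDerivAt_id t).smul_const v).const_add x
  have := (hderiv (x + t • v)).comp_hasDerivAt t h1
  exact this

/-- convexity gradient inequality -/
lemma gd_convex_grad {E : Type*} [NormedAddCommGroup E] [InnerProductSpace ℝ E]
    (f : E → ℝ) (f' : E → E) (hconv : ConvexOn ℝ Set.univ f)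
    (hderiv : ∀ x, HasFDerivAt f (innerSL ℝ (f' x)) x) (x y : E) :
    f x + (inner ℝ (f' x) (y - x) : ℝ) ≤ f y := by
  set g : ℝ → ℝ := fun s => f (x + s • (y - x)) with hg
  have hgc : ConvexOn ℝ Set.univ g := by
    have h0 := hconv.comp_affineMap (AffineMap.lineMap x y : ℝ →ᵃ[ℝ] E)
    have heq : (f ∘ (AffineMap.lineMap x y : ℝ →ᵃ[ℝ] E)) = g := by
      funext s
      simp [hg, AffineMap.lineMap_apply, Function.comp, vsub_eq_sub, vadd_eq_add]
      congr 1; abel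
    have hset : ((AffineMap.lineMap x y : ℝ →ᵃ[ℝ] E)) ⁻¹' Set.univ = Set.univ := by simp
    rw [heq, hset] at h0
    exact h0
  have hd : HasDerivAt g (inner ℝ (f' x) (y - x) : ℝ) 0 := by
    simpa using gd_line_deriv f f' hderiv x (y - x) 0
  have := hgc.le_slope_of_hasDerivAt (Set.mem_univ (0:ℝ)) (Set.mem_univ (1:ℝ)) one_pos hd
  rw [slope_def_field] at this
  simp only [hg] at this
  simp only [zero_smul, add_zero, one_smul] at this
  have h1 : f (x + (y - x)) = f y := by congr 1; abel
  rw [h1] at this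
  norm_num at this
  linarith

/-- descent lemma -/
lemma gd_descent {E : Type*} [NormedAddCommGroup E] [InnerProductSpace ℝ E]
    (f : E → ℝ) (f' : E → E) (L : ℝ) (hL : 0 < L)
    (hderiv : ∀ x, HasFDerivAt f (innerSL ℝ (f' x)) x)
    (hlip : ∀ x y, ‖f' x - f' y‖ ≤ L * ‖x - y‖) (x y : E) :
    f y ≤ f x + (inner ℝ (f' x) (y - x) : ℝ) + L / 2 * ‖y - x‖ ^ 2 := by
  set v : E := y - x with hv
  set h : ℝ → ℝ := fun t => f (x + t • v) - t * (inner ℝ (f' x) v : ℝ) - L / 2 * ‖v‖ ^ 2 * t ^ 2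
    with hh
  have hder : ∀ t : ℝ, HasDerivAt h
      ((inner ℝ (f' (x + t • v)) v : ℝ) - (inner ℝ (f' x) v : ℝ) - L * ‖v‖ ^ 2 * t) t := by
    intro t
    have h1 := gd_line_deriv f f' hderiv x v t
    have h2 : HasDerivAt (fun t : ℝ => t * (inner ℝ (f' x) v : ℝ)) (inner ℝ (f' x) v : ℝ) t := by
      simpa using (hasDerivAt_id t).mul_const (inner ℝ (f' x) v : ℝ)
    have h3 : HasDerivAt (fun t : ℝ => L / 2 * ‖v‖ ^ 2 * t ^ 2) (L * ‖v‖ ^ 2 * t) t := by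
      have := (hasDerivAt_pow 2 t).const_mul (L / 2 * ‖v‖ ^ 2)
      exact this.congr_deriv (by ring)
    exact (h1.sub h2).sub h3
  have hanti : AntitoneOn h (Set.Icc (0:ℝ) 1) := by
    apply antitoneOn_of_deriv_nonpos (convex_Icc 0 1)
    · exact fun t _ => (hder t).continuousAt.continuousWithinAt
    · exact fun t _ => ((hder t).differentiableAt).differentiableWithinAt
    · intro t ht
      rw [interior_Icc] at ht
      rw [(hder t).deriv]
      have hineq : (inner ℝ (f' (x + t • v) - f' x) v : ℝ) ≤ L * ‖v‖ ^ 2 * t := by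
        calc (inner ℝ (f' (x + t • v) - f' x) v : ℝ) ≤ ‖f' (x + t • v) - f' x‖ * ‖v‖ :=
              real_inner_le_norm _ _
          _ ≤ L * ‖x + t • v - x‖ * ‖v‖ := by
              have := hlip (x + t • v) x
              exact mul_le_mul_of_nonneg_right this (norm_nonneg v)
          _ = L * ‖v‖ ^ 2 * t := by
              have : ‖x + t • v - x‖ = t * ‖v‖ := by
                simp [norm_smul, abs_of_pos ht.1]
              rw [this]; ring
      rw [inner_sub_left] at hineq
      linarith
  have := hanti (Set.left_mem_Icc.2 zero_le_one) (Set.right_mem_Icc.2 zero_le_one) zero_le_one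
  simp only [hh] at this
  simp only [zero_smul, add_zero, one_smul, zero_mul, one_mul, one_pow, mul_zero, ne_eq] at this
  have hxy : x + v = y := by rw [hv]; abel
  rw [hxy] at this
  linarith

/-- The classical `O(1/k)` bound for fixed-step gradient descent:
for every `k ≥ 1` and every minimizer `x̄`,
`k (f(x_k) − f*) ≤ ∑_{T=1}^{k} (f(x_T) − f*) ≤ ‖x_0 − x̄‖²/(2ᾱ)`, and in particular
`f(x_k) − f* ≤ dist(x_0, Ω)²/(2ᾱk)`. -/
theorem gradient_descent_O_one_div_k
    {E : Type*} [NormedAddCommGroup E] [InnerProductSpace ℝ E]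
    (f : E → ℝ) (f' : E → E) (L : ℝ) (hL : 0 < L)
    (hconv : ConvexOn ℝ Set.univ f)
    (hderiv : ∀ x, HasFDerivAt f (innerSL ℝ (f' x)) x)
    (hlip : ∀ x y, ‖f' x - f' y‖ ≤ L * ‖x - y‖)
    (Ω : Set E) (hΩ : Ω = {z | ∀ y, f z ≤ f y})
    (xstar : E) (hxstar : xstar ∈ Ω)
    (α : ℝ) (hα0 : 0 < α) (hαL : α ≤ 1 / L)
    (x : ℕ → E) (hx : ∀ k, x (k + 1) = x k - α • f' (x k)) :
    ∀ k : ℕ, 1 ≤ k →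
      (∀ xbar ∈ Ω,
        (k : ℝ) * (f (x k) - f xstar) ≤ ∑ T ∈ Finset.Icc 1 k, (f (x T) - f xstar) ∧
        ∑ T ∈ Finset.Icc 1 k, (f (x T) - f xstar) ≤ ‖x 0 - xbar‖ ^ 2 / (2 * α)) ∧
      f (x k) - f xstar ≤ Metric.infDist (x 0) Ω ^ 2 / (2 * α * k) := by
  have hmin : ∀ y, f xstar ≤ f y := by rw [hΩ] at hxstar; exact hxstar
  have hLα : L * α ≤ 1 := by
    rw [le_div_iff₀ hL] at hαL; linarith
  have h2α : (0:ℝ) < 2 * α := by linarith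
  -- one-step decrease
  have hstep : ∀ j, f (x (j + 1)) + α / 2 * ‖f' (x j)‖ ^ 2 ≤ f (x j) := by
    intro j
    have hd := gd_descent f f' L hL hderiv hlip (x j) (x (j + 1))
    have hdiff : x (j + 1) - x j = -(α • f' (x j)) := by rw [hx j]; abel
    rw [hdiff] at hd
    have hinner : (inner ℝ (f' (x j)) (-(α • f' (x j))) : ℝ) = -(α * ‖f' (x j)‖ ^ 2) := by
      rw [inner_neg_right, real_inner_smul_right, real_inner_self_eq_norm_sq]
    have hnorm : ‖-(α • f' (x j))‖ ^ 2 = α ^ 2 * ‖f' (x j)‖ ^ 2 := by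
      rw [norm_neg, norm_smul, mul_pow, Real.norm_eq_abs, sq_abs]
    rw [hinner, hnorm] at hd
    nlinarith [sq_nonneg ‖f' (x j)‖, sq_nonneg α]
  -- monotone decrease
  have hmono : ∀ i j : ℕ, i ≤ j → f (x j) ≤ f (x i) := by
    have : Antitone (fun n => f (x n)) := antitone_nat_of_succ_le fun n => by
      have := hstep n
      nlinarith [sq_nonneg ‖f' (x n)‖]
    exact fun i j hij => this hij
  -- per-step bound w.r.t. a minimizer
  have hkey : ∀ j, ∀ xbar ∈ Ω, f (x (j + 1)) - f xstar ≤
      (‖x j - xbar‖ ^ 2 - ‖x (j + 1) - xbar‖ ^ 2) / (2 * α) := by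
    intro j xbar hb
    have hbmin : ∀ y, f xbar ≤ f y := by rw [hΩ] at hb; exact hb
    have hcg := gd_convex_grad f f' hconv hderiv (x j) xbar
    have hB : ‖x (j + 1) - xbar‖ ^ 2 = ‖x j - xbar‖ ^ 2
        - 2 * α * (inner ℝ (f' (x j)) (x j - xbar) : ℝ) + α ^ 2 * ‖f' (x j)‖ ^ 2 := by
      have hdiff : x (j + 1) - xbar = (x j - xbar) - α • f' (x j) := by rw [hx j]; abel
      rw [hdiff, norm_sub_sq_real, real_inner_smul_right, norm_smul, Real.norm_eq_abs]
      rw [real_inner_comm]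
      rw [mul_pow, sq_abs]
      ring
    have hinnersub : (inner ℝ (f' (x j)) (xbar - x j) : ℝ)
        = -(inner ℝ (f' (x j)) (x j - xbar) : ℝ) := by
      rw [← inner_neg_right]; congr 1; abel
    rw [hinnersub] at hcg
    have hfrac : (‖x j - xbar‖ ^ 2 - ‖x (j + 1) - xbar‖ ^ 2) / (2 * α)
        = (inner ℝ (f' (x j)) (x j - xbar) : ℝ) - α / 2 * ‖f' (x j)‖ ^ 2 := by
      rw [hB]; field_simp; ring
    rw [hfrac]
    have h1 := hstep j
    have h2 := hbmin xstar
    have h3 := hmin xbar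
    linarith
  -- telescoping sum
  have hsum : ∀ m : ℕ, ∀ xbar ∈ Ω, ∑ T ∈ Finset.Icc 1 m, (f (x T) - f xstar)
      ≤ (‖x 0 - xbar‖ ^ 2 - ‖x m - xbar‖ ^ 2) / (2 * α) := by
    intro m
    induction m with
    | zero => intro xbar _; simp
    | succ n ih =>
      intro xbar hb
      rw [Finset.sum_Icc_succ_top (by omega : 1 ≤ n + 1)]
      have h1 := ih xbar hb
      have h2 := hkey n xbar hb
      have hcomb : (‖x 0 - xbar‖ ^ 2 - ‖x n - xbar‖ ^ 2) / (2 * α)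
          + (‖x n - xbar‖ ^ 2 - ‖x (n + 1) - xbar‖ ^ 2) / (2 * α)
          = (‖x 0 - xbar‖ ^ 2 - ‖x (n + 1) - xbar‖ ^ 2) / (2 * α) := by
        rw [← add_div]; ring_nf
      linarith
  intro k hk
  have hpart1 : ∀ xbar ∈ Ω,
      (k : ℝ) * (f (x k) - f xstar) ≤ ∑ T ∈ Finset.Icc 1 k, (f (x T) - f xstar) ∧
      ∑ T ∈ Finset.Icc 1 k, (f (x T) - f xstar) ≤ ‖x 0 - xbar‖ ^ 2 / (2 * α) := by
    intro xbar hb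
    constructor
    · have hcard : (Finset.Icc 1 k).card = k := by rw [Nat.card_Icc]; omega
      calc (k : ℝ) * (f (x k) - f xstar)
          = ∑ _T ∈ Finset.Icc 1 k, (f (x k) - f xstar) := by
            rw [Finset.sum_const, hcard, nsmul_eq_mul]
        _ ≤ ∑ T ∈ Finset.Icc 1 k, (f (x T) - f xstar) := by
            apply Finset.sum_le_sum
            intro T hT
            have hTk : T ≤ k := (Finset.mem_Icc.1 hT).2
            have := hmono T k hTk
            linarith
    · have h1 := hsum k xbar hb
      have h2 : (‖x 0 - xbar‖ ^ 2 - ‖x k - xbar‖ ^ 2) / (2 * α)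
          ≤ ‖x 0 - xbar‖ ^ 2 / (2 * α) :=
        (div_le_div_iff_of_pos_right h2α).mpr (sub_le_self _ (sq_nonneg _))
      linarith
  refine ⟨hpart1, ?_⟩
  -- infDist part
  have hc : 0 ≤ f (x k) - f xstar := sub_nonneg.2 (hmin (x k))
  have hk1 : (1:ℝ) ≤ (k:ℝ) := by exact_mod_cast hk
  have hkpos : (0:ℝ) < 2 * α * k := by positivity
  have hbound : ∀ xbar ∈ Ω, 2 * α * (k:ℝ) * (f (x k) - f xstar) ≤ dist (x 0) xbar ^ 2 := by
    intro xbar hb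
    obtain ⟨ha, hbb⟩ := hpart1 xbar hb
    have h3 : (k : ℝ) * (f (x k) - f xstar) ≤ ‖x 0 - xbar‖ ^ 2 / (2 * α) := le_trans ha hbb
    rw [le_div_iff₀ h2α] at h3
    rw [dist_eq_norm]
    nlinarith
  have hcnneg : 0 ≤ 2 * α * (k:ℝ) * (f (x k) - f xstar) := by positivity
  have hsqrt : Real.sqrt (2 * α * (k:ℝ) * (f (x k) - f xstar)) ≤ Metric.infDist (x 0) Ω := by
    by_contra hlt
    push_neg at hlt
    obtain ⟨y, hy, hdy⟩ := (Metric.infDist_lt_iff ⟨xstar, hxstar⟩).1 hlt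
    have h4 := hbound y hy
    have h5 : dist (x 0) y ^ 2 < Real.sqrt (2 * α * (k:ℝ) * (f (x k) - f xstar)) ^ 2 := by
      apply sq_lt_sq' _ hdy
      have := dist_nonneg (x := x 0) (y := y)
      linarith [Real.sqrt_nonneg (2 * α * (k:ℝ) * (f (x k) - f xstar))]
    rw [Real.sq_sqrt hcnneg] at h5
    linarith
  have h6 : 2 * α * (k:ℝ) * (f (x k) - f xstar) ≤ Metric.infDist (x 0) Ω ^ 2 := by
    have := pow_le_pow_left₀ (Real.sqrt_nonneg _) hsqrt 2
    rwa [Real.sq_sqrt hcnneg] at this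
  rw [le_div_iff₀ hkpos]
  linarith
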